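/- arXiv:1402.1674 — 6 statements merged into one kernel-verified Lean document; each statement's English description precedes it below -/
import Mathlib

section
/- Let N ≥ 1 be a number of secondary users (SUs), let θ : Fin N → ℝ be antitone (SUs sorted in descending order of type) with θ i > 0 for all i, and let B_R ≥ 0 (reserved bandwidth) and r > 0 (registration fee) be real numbers. Let k* be the largest k ∈ {0, 1, …, N} such that k = 0 or B_R·θ(k−1) > k·r (this maximum exists since the candidate set contains 0 and is finite). Then the strategy profile in which exactly the SUs with indices 0, …, k*−1 register is a Nash equilibrium of the complete-information database registration game: (i) for every index i with i < k* one has B_R·θ(i) > k*·r, so each registered SU's utility B_R·θ(i)/k* − r is positive and in particular at least the utility 0 it would get from not registering; and (ii) for every index j with k* ≤ j < N one has B_R·θ(j) ≤ (k*+1)·r, so an unregistered SU deviating to register would obtain utility B_R·θ(j)/(k*+1) − r ≤ 0, no more than its current utility 0. -/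
/-- In the complete-information database registration game with `N ≥ 1`
SUs of positive types `θ` sorted in descending order (antitone), reserved bandwidth
`B_R ≥ 0` and registration fee `r > 0`, let `kstar` be the largest
`k ∈ {0, 1, …, N}` such that `k = 0` or `B_R·θ(k-1) > k·r`.  Then the profile in which
exactly the SUs `0, …, kstar - 1` register is a Nash equilibrium:
(i) every registered SU `i < kstar` has `B_R·θ(i) > kstar·r`, so its utility
`B_R·θ(i)/kstar − r` is positive (in particular at least the utility `0` of not registering);
(ii) every unregistered SU `j ≥ kstar` has `B_R·θ(j) ≤ (kstar+1)·r`, so the deviation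
utility `B_R·θ(j)/(kstar+1) − r` is non-positive, no more than its current utility `0`. -/
theorem stmt0 (N : ℕ) (hN : 1 ≤ N) (θ : Fin N → ℝ) (hθanti : Antitone θ)
    (hθpos : ∀ i, 0 < θ i) (B_R r : ℝ) (hB : 0 ≤ B_R) (hr : 0 < r)
    (kstar : ℕ) (hkle : kstar ≤ N)
    (hkmem : kstar = 0 ∨ ∃ h : kstar - 1 < N, B_R * θ ⟨kstar - 1, h⟩ > (kstar : ℝ) * r)
    (hkmax : ∀ k, k ≤ N → (k = 0 ∨ ∃ h : k - 1 < N, B_R * θ ⟨k - 1, h⟩ > (k : ℝ) * r) →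
      k ≤ kstar) :
    (∀ i : Fin N, (i : ℕ) < kstar →
      B_R * θ i > (kstar : ℝ) * r ∧
      0 < B_R * θ i / (kstar : ℝ) - r ∧
      B_R * θ i / (kstar : ℝ) - r ≥ 0) ∧
    (∀ j : Fin N, kstar ≤ (j : ℕ) →
      B_R * θ j ≤ ((kstar : ℝ) + 1) * r ∧
      B_R * θ j / ((kstar : ℝ) + 1) - r ≤ 0) := by
  constructor
  · intro i hi
    have hk0 : 0 < kstar := Nat.pos_of_ne_zero (by rintro rfl; omega)
    have hmem := hkmem.resolve_left (by omega)
    obtain ⟨h, hgt⟩ := hmem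
    have hle : θ (⟨kstar - 1, h⟩ : Fin N) ≤ θ i := hθanti (by simp [Fin.le_def]; omega)
    have h1 : B_R * θ i > (kstar : ℝ) * r := lt_of_lt_of_le hgt (by nlinarith)
    refine ⟨h1, ?_, ?_⟩
    · have hkpos : (0:ℝ) < (kstar : ℝ) := by exact_mod_cast hk0
      rw [sub_pos, lt_div_iff₀ hkpos]
      linarith [h1]
    · have hkpos : (0:ℝ) < (kstar : ℝ) := by exact_mod_cast hk0
      rw [ge_iff_le, sub_nonneg, le_div_iff₀ hkpos]
      linarith [h1]
  · intro j hj
    have hjN : (j : ℕ) < N := j.isLt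
    have hkN : kstar < N := lt_of_le_of_lt hj hjN
    have hnot : ¬ (B_R * θ (⟨kstar, hkN⟩ : Fin N) > ((kstar : ℝ) + 1) * r) := by
      intro hgt
      have := hkmax (kstar + 1) (by omega)
        (Or.inr ⟨by simpa using hkN, by push_cast; simpa using hgt⟩)
      omega
    push_neg at hnot
    have hle : θ j ≤ θ (⟨kstar, hkN⟩ : Fin N) := hθanti (by simp [Fin.le_def]; omega)
    have h1 : B_R * θ j ≤ ((kstar : ℝ) + 1) * r := le_trans (by nlinarith) hnot
    refine ⟨h1, ?_⟩
    have hkpos : (0:ℝ) < (kstar : ℝ) + 1 := by positivity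
    rw [sub_nonpos, div_le_iff₀ hkpos]
    linarith
end

section
/- For every N ≥ 1, every θ : Fin N → ℝ with θ i > 0 for all i, every B_R ≥ 0 and every r > 0, the complete-information database registration game possesses a pure-strategy Nash equilibrium: there exists a : Fin N → Bool such that, writing μ₀ = #{i : a i = true}, every i with a i = true satisfies B_R·θ(i)/μ₀ − r ≥ 0 and every i with a i = false satisfies B_R·θ(i)/(μ₀+1) − r ≤ 0. (No ordering assumption on θ is required.) -/
/-- For every `N ≥ 1`, every family of positive types `θ : Fin N → ℝ`
(no ordering assumption), every reserved bandwidth `B_R ≥ 0` and registration fee `r > 0`,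
the complete-information database registration game has a pure-strategy Nash equilibrium:
there is a profile `a : Fin N → Bool` (true = register) such that, with
`μ₀ = #{i : a i = true}`, every registered SU has `B_R·θ(i)/μ₀ − r ≥ 0` and every
unregistered SU has `B_R·θ(i)/(μ₀+1) − r ≤ 0`. -/
theorem stmt1 (N : ℕ) (hN : 1 ≤ N) (θ : Fin N → ℝ) (hθpos : ∀ i, 0 < θ i)
    (B_R r : ℝ) (hB : 0 ≤ B_R) (hr : 0 < r) :
    ∃ a : Fin N → Bool,
      (∀ i : Fin N, a i = true →
        B_R * θ i / ((Finset.univ.filter fun j => a j = true).card : ℝ) - r ≥ 0) ∧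
      (∀ i : Fin N, a i = false →
        B_R * θ i / (((Finset.univ.filter fun j => a j = true).card : ℝ) + 1) - r ≤ 0) := by
  classical
  set S : ℕ → Finset (Fin N) :=
    fun m => Finset.univ.filter (fun i => (m : ℝ) * r ≤ B_R * θ i) with hS
  set P : ℕ → Prop := fun m => m ≤ (S m).card with hPdef
  have hP0 : P 0 := Nat.zero_le _
  set k : ℕ := Nat.findGreatest P N with hk
  have hPk : P k := Nat.findGreatest_spec (Nat.zero_le N) hP0
  have hkN : k ≤ N := Nat.findGreatest_le N
  -- |S (k+1)| ≤ k
  have hSk1 : (S (k + 1)).card ≤ k := by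
    rcases eq_or_lt_of_le hkN with h | h
    · calc (S (k+1)).card ≤ (Finset.univ : Finset (Fin N)).card := Finset.card_filter_le _ _
        _ = N := Finset.card_univ.trans (Fintype.card_fin N)
        _ = k := h.symm
    · have hnot : ¬ P (k + 1) := Nat.findGreatest_is_greatest (Nat.lt_succ_self k) h
      omega
  have hsub : S (k + 1) ⊆ S k := by
    intro i hi
    simp only [hS, Finset.mem_filter, Finset.mem_univ, true_and] at hi ⊢
    refine le_trans ?_ hi
    have : (k : ℝ) ≤ (k : ℝ) + 1 := by linarith
    push_cast
    nlinarith [hr.le]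
  obtain ⟨A, hA1, hA2, hAcard⟩ :=
    Finset.exists_subsuperset_card_eq hsub hSk1 hPk
  refine ⟨fun i => decide (i ∈ A), ?_, ?_⟩
  all_goals
    have hfilter : (Finset.univ.filter fun j => decide (j ∈ A) = true) = A := by
      simp [Finset.filter_univ_mem]
  · intro i hi
    rw [hfilter, hAcard]
    simp only [decide_eq_true_eq] at hi
    have hkpos : 0 < k := by
      rcases Nat.eq_zero_or_pos k with h0 | h0
      · exfalso
        have : A = ∅ := Finset.card_eq_zero.mp (by rw [hAcard, h0])
        simp [this] at hi
      · exact h0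
    have hiS : i ∈ S k := hA2 hi
    simp only [hS, Finset.mem_filter, Finset.mem_univ, true_and] at hiS
    have hkR : (0 : ℝ) < (k : ℝ) := by exact_mod_cast hkpos
    rw [ge_iff_le, sub_nonneg, le_div_iff₀ hkR]
    linarith
  · intro i hi
    rw [hfilter, hAcard]
    simp only [decide_eq_false_iff_not] at hi
    have hiS : i ∉ S (k + 1) := fun h => hi (hA1 h)
    simp only [hS, Finset.mem_filter, Finset.mem_univ, true_and, not_le] at hiS
    have hkR : (0 : ℝ) < (k : ℝ) + 1 := by positivity
    rw [sub_nonpos, div_le_iff₀ hkR]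
    push_cast at hiS ⊢
    linarith
end

section
/- Let N ∈ ℕ and for each player i ∈ Fin N let f i : ℕ → ℝ and g i : ℕ → ℝ be antitone (non-increasing) functions. Then the two-strategy crowding game with player-specific payoffs possesses a pure-strategy Nash equilibrium: there exists a profile a : Fin N → Bool such that, writing μ₀ = #{i : a i = false} and μ₁ = #{i : a i = true}, for every player i: if a i = false then f i μ₀ ≥ g i (μ₁ + 1), and if a i = true then g i μ₁ ≥ f i (μ₀ + 1). -/
/-- Every two-strategy crowding game with player-specific antitone
payoff functions `f i` (for strategy `false`) and `g i` (for strategy `true`) possesses a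
pure-strategy Nash equilibrium: there is a profile `a : Fin N → Bool` such that, writing
`μ₀ = #{j : a j = false}` and `μ₁ = #{j : a j = true}`, every player playing `false`
satisfies `f i μ₀ ≥ g i (μ₁ + 1)` and every player playing `true` satisfies
`g i μ₁ ≥ f i (μ₀ + 1)`. -/
theorem stmt2 (N : ℕ) (f g : Fin N → ℕ → ℝ)
    (hf : ∀ i, Antitone (f i)) (hg : ∀ i, Antitone (g i)) :
    ∃ a : Fin N → Bool,
      ∀ i : Fin N,
        (a i = false →
          f i (Finset.univ.filter fun j => a j = false).card ≥
            g i ((Finset.univ.filter fun j => a j = true).card + 1)) ∧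
        (a i = true →
          g i (Finset.univ.filter fun j => a j = true).card ≥
            f i ((Finset.univ.filter fun j => a j = false).card + 1)) := by
  classical
  -- A k : players happy to play `true` when μ₁ = k
  set A : ℕ → Finset (Fin N) := fun k =>
    Finset.univ.filter fun i => f i (N - k + 1) ≤ g i k with hA
  set P : ℕ → Prop := fun k => k ≤ (A k).card with hP
  have hP0 : P 0 := Nat.zero_le _
  set K := Nat.findGreatest P N with hKdef
  have hKN : K ≤ N := Nat.findGreatest_le N
  have hKP : K ≤ (A K).card := Nat.findGreatest_spec (Nat.zero_le N) hP0
  -- S : players unhappy to play `false` when μ₁ = K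
  set S : Finset (Fin N) := Finset.univ.filter fun i => f i (N - K) < g i (K + 1) with hS
  have hSA : S ⊆ A K := by
    intro i hi
    simp only [hS, Finset.mem_filter, Finset.mem_univ, true_and] at hi
    simp only [hA, Finset.mem_filter, Finset.mem_univ, true_and]
    calc f i (N - K + 1) ≤ f i (N - K) := hf i (by omega)
      _ ≤ g i (K + 1) := le_of_lt hi
      _ ≤ g i K := hg i (by omega)
  have hScard : S.card ≤ K := by
    rcases eq_or_lt_of_le hKN with h | h
    · calc S.card ≤ Fintype.card (Fin N) := Finset.card_le_univ S
        _ = N := Fintype.card_fin N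
        _ = K := h.symm
    · have hnP : ¬ P (K + 1) :=
        Nat.findGreatest_is_greatest (n := N) (by omega) (by omega)
      have hSA' : S ⊆ A (K + 1) := by
        intro i hi
        simp only [hS, Finset.mem_filter, Finset.mem_univ, true_and] at hi
        simp only [hA, Finset.mem_filter, Finset.mem_univ, true_and]
        have : N - (K + 1) + 1 = N - K := by omega
        rw [this]
        exact le_of_lt hi
      have : (A (K + 1)).card ≤ K := by
        simp only [hP, not_le] at hnP
        omega
      exact le_trans (Finset.card_le_card hSA') this
  obtain ⟨T, hST, hTA, hTcard⟩ := Finset.exists_subsuperset_card_eq hSA hScard hKP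
  refine ⟨fun i => decide (i ∈ T), fun i => ?_⟩
  have htrue : (Finset.univ.filter fun j => (decide (j ∈ T) : Bool) = true) = T := by
    ext j; simp
  have hfalse : (Finset.univ.filter fun j => (decide (j ∈ T) : Bool) = false).card = N - K := by
    have : (Finset.univ.filter fun j => (decide (j ∈ T) : Bool) = false) = Tᶜ := by
      ext j; simp
    rw [this, Finset.card_compl, hTcard, Fintype.card_fin]
  constructor
  · intro hi
    simp only [decide_eq_false_iff_not] at hi
    have hiS : i ∉ S := fun h => hi (hST h)
    simp only [hS, Finset.mem_filter, Finset.mem_univ, true_and, not_lt] at hiS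
    rw [hfalse, htrue, hTcard]
    exact hiS
  · intro hi
    simp only [decide_eq_true_eq] at hi
    have hiA : i ∈ A K := hTA hi
    simp only [hA, Finset.mem_filter, Finset.mem_univ, true_and] at hiA
    rw [hfalse, htrue, hTcard]
    exact hiA
end

section
/- Let N ∈ ℕ and for each player i ∈ Fin N let f i : ℕ → ℝ and g i : ℕ → ℝ be antitone (non-increasing) functions. Then for every initial profile a⁰ : Fin N → Bool there exist L ≤ N·(N+1) and a sequence of profiles a⁰, a¹, …, a^L : Fin N → Bool such that: (i) for each step ℓ < L, the profiles a^ℓ and a^{ℓ+1} differ in the strategy of exactly one player, and that player's payoff in a^{ℓ+1} (evaluated with the strategy counts of a^{ℓ+1}) is strictly greater than its payoff in a^ℓ (evaluated with the strategy counts of a^ℓ); and (ii) the final profile a^L is a pure-strategy Nash equilibrium. -/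
/-- Number of players choosing strategy `false` in profile `a`. -/
def mu0 {N : ℕ} (a : Fin N → Bool) : ℕ := (Finset.univ.filter fun j => a j = false).card

/-- Number of players choosing strategy `true` in profile `a`. -/
def mu1 {N : ℕ} (a : Fin N → Bool) : ℕ := (Finset.univ.filter fun j => a j = true).card

/-- Payoff of player `i` in profile `a` of the two-strategy crowding game with
player-specific payoff functions `f i` (strategy `false`) and `g i` (strategy `true`). -/
noncomputable def payoff {N : ℕ} (f g : Fin N → ℕ → ℝ) (i : Fin N) (a : Fin N → Bool) : ℝ :=
  if a i = true then g i (mu1 a) else f i (mu0 a)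

/-- Pure-strategy Nash equilibrium of the two-strategy crowding game: no player can
strictly improve by unilaterally switching (the deviator's payoff is evaluated with the
count of the other strategy increased by one). -/
def isNE {N : ℕ} (f g : Fin N → ℕ → ℝ) (a : Fin N → Bool) : Prop :=
  ∀ i : Fin N,
    (a i = false → g i (mu1 a + 1) ≤ f i (mu0 a)) ∧
    (a i = true → f i (mu0 a + 1) ≤ g i (mu1 a))

section helpers
variable {N : ℕ}

lemma mu0_add_mu1 (a : Fin N → Bool) : mu0 a + mu1 a = N := by
  unfold mu0 mu1
  have : (Finset.univ.filter fun j => a j = true) =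
      (Finset.univ.filter fun j : Fin N => ¬ a j = false) := by
    apply Finset.filter_congr; intro x _; simp
  rw [this, Finset.card_filter_add_card_filter_not, Finset.card_univ, Fintype.card_fin]

lemma mu1_le (a : Fin N → Bool) : mu1 a ≤ N := by
  have := mu0_add_mu1 a; omega

lemma mu1_pos (a : Fin N → Bool) {i : Fin N} (h : a i = true) : 1 ≤ mu1 a := by
  have : i ∈ Finset.univ.filter fun j => a j = true := by simp [h]
  have := Finset.card_pos.mpr ⟨i, this⟩
  exact this

lemma mu1_update_true (a : Fin N → Bool) (i : Fin N) (h : a i = false) :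
    mu1 (Function.update a i true) = mu1 a + 1 := by
  unfold mu1
  have hset : (Finset.univ.filter fun j => Function.update a i true j = true) =
      insert i (Finset.univ.filter fun j => a j = true) := by
    ext j
    by_cases hj : j = i
    · subst hj; simp
    · simp [Function.update_of_ne hj, hj]
  rw [hset, Finset.card_insert_of_notMem (by simp [h])]

lemma mu1_update_false (a : Fin N → Bool) (i : Fin N) (h : a i = true) :
    mu1 a = mu1 (Function.update a i false) + 1 := by
  unfold mu1
  have hset : (Finset.univ.filter fun j => a j = true) =
      insert i (Finset.univ.filter fun j => Function.update a i false j = true) := by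
    ext j
    by_cases hj : j = i
    · subst hj; simp [h]
    · simp [Function.update_of_ne hj, hj]
  rw [hset, Finset.card_insert_of_notMem (by simp)]

/-- Player `i` strictly prefers strategy `true` when the total count on `true`
(including itself) is `l`. -/
def Want {N : ℕ} (f g : Fin N → ℕ → ℝ) (i : Fin N) (l : ℕ) : Prop :=
  f i (N + 1 - l) < g i l

/-- Player `i` strictly prefers strategy `false` when the total count on `true`
(including itself) is `t`. -/
def Leave {N : ℕ} (f g : Fin N → ℕ → ℝ) (i : Fin N) (t : ℕ) : Prop :=
  g i t < f i (N + 1 - t)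

variable {f g : Fin N → ℕ → ℝ}

lemma want_not_leave {i : Fin N} {l : ℕ} (h : Want f g i l) : ¬ Leave f g i l :=
  fun h' => absurd h (not_lt.mpr h'.le)

lemma want_mono (hf : ∀ i, Antitone (f i)) (hg : ∀ i, Antitone (g i))
    {i : Fin N} {l l' : ℕ} (hle : l' ≤ l) (h : Want f g i l) : Want f g i l' :=
  lt_of_le_of_lt (hf i (Nat.sub_le_sub_left hle (N + 1)))
    (lt_of_lt_of_le h (hg i hle))

lemma leave_mono (hf : ∀ i, Antitone (f i)) (hg : ∀ i, Antitone (g i))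
    {i : Fin N} {t t' : ℕ} (hle : t ≤ t') (h : Leave f g i t) : Leave f g i t' :=
  lt_of_le_of_lt (hg i hle) (lt_of_lt_of_le h (hf i (Nat.sub_le_sub_left hle (N + 1))))

/-- One improving unilateral deviation. -/
def IsImp (f g : Fin N → ℕ → ℝ) (a b : Fin N → Bool) : Prop :=
  ∃ i : Fin N, b i ≠ a i ∧ (∀ j : Fin N, j ≠ i → b j = a j) ∧
    payoff f g i a < payoff f g i b

/-- There is an improvement path of length at most `k` from `a` to a Nash equilibrium. -/
def ImpPath (f g : Fin N → ℕ → ℝ) (a : Fin N → Bool) (k : ℕ) : Prop :=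
  ∃ (L : ℕ) (seq : ℕ → Fin N → Bool),
    L ≤ k ∧ seq 0 = a ∧
    (∀ ℓ < L, IsImp f g (seq ℓ) (seq (ℓ + 1))) ∧
    isNE f g (seq L)

lemma path_mono {a : Fin N → Bool} {k k' : ℕ} (hk : k ≤ k') (h : ImpPath f g a k) :
    ImpPath f g a k' := by
  obtain ⟨L, seq, h1, h2, h3, h4⟩ := h
  exact ⟨L, seq, h1.trans hk, h2, h3, h4⟩

lemma path_nil {a : Fin N → Bool} (h : isNE f g a) : ImpPath f g a 0 :=
  ⟨0, fun _ => a, le_refl 0, rfl, fun ℓ hℓ => absurd hℓ (Nat.not_lt_zero ℓ), h⟩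

lemma path_cons {a b : Fin N → Bool} {k : ℕ} (hab : IsImp f g a b) (hb : ImpPath f g b k) :
    ImpPath f g a (k + 1) := by
  obtain ⟨L, seq, h1, h2, h3, h4⟩ := hb
  refine ⟨L + 1, fun n => Nat.casesOn n a seq, by omega, rfl, ?_, h4⟩
  intro ℓ hℓ
  match ℓ with
  | 0 => simpa [h2] using hab
  | (m + 1) => exact h3 m (by omega)

lemma imp_enter {a : Fin N → Bool} {i : Fin N} (h : a i = false)
    (hw : Want f g i (mu1 a + 1)) : IsImp f g a (Function.update a i true) := by
  refine ⟨i, by simp [h], fun j hj => Function.update_of_ne hj _ _, ?_⟩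
  have h1 : payoff f g i a = f i (mu0 a) := by simp [payoff, h]
  have h2 : payoff f g i (Function.update a i true) = g i (mu1 a + 1) := by
    simp [payoff, mu1_update_true a i h]
  rw [h1, h2]
  have hmu : mu0 a = N + 1 - (mu1 a + 1) := by have := mu0_add_mu1 a; omega
  rw [hmu]; exact hw

lemma imp_exit {a : Fin N → Bool} {i : Fin N} (h : a i = true)
    (hl : Leave f g i (mu1 a)) : IsImp f g a (Function.update a i false) := by
  refine ⟨i, by simp [h], fun j hj => Function.update_of_ne hj _ _, ?_⟩
  set b := Function.update a i false with hb
  have h1 : payoff f g i a = g i (mu1 a) := by simp [payoff, h]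
  have h2 : payoff f g i b = f i (mu0 b) := by simp [payoff, b]
  rw [h1, h2]
  have hc : mu1 a = mu1 b + 1 := mu1_update_false a i h
  have hmu : mu0 b = N + 1 - mu1 a := by
    have := mu0_add_mu1 b; have := mu1_le a; omega
  rw [hmu]; exact hl

lemma ne_of {a : Fin N → Bool} (h1 : ∀ i, a i = false → ¬ Want f g i (mu1 a + 1))
    (h2 : ∀ i, a i = true → ¬ Leave f g i (mu1 a)) : isNE f g a := by
  intro i
  constructor
  · intro h
    have := h1 i h
    have hmu : mu0 a = N + 1 - (mu1 a + 1) := by have := mu0_add_mu1 a; omega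
    rw [hmu]; exact not_lt.mp this
  · intro h
    have := h2 i h
    have hmu : mu0 a + 1 = N + 1 - mu1 a := by
      have := mu0_add_mu1 a; have := mu1_pos a h; omega
    rw [hmu]; exact not_lt.mp this


open Classical in
lemma lemB (hf : ∀ i, Antitone (f i)) (hg : ∀ i, Antitone (g i)) :
    ∀ (m : ℕ) (a : Fin N → Bool),
      (∀ i, a i = true → ¬ Leave f g i (mu1 a)) →
      (Finset.univ.filter fun p => a p = false ∧ Want f g p (mu1 a + 1)).card ≤ m →
      ImpPath f g a (2 * m) := by
  intro m
  induction m with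
  | zero =>
    intro a hinv hF
    refine path_mono (by omega) (path_nil (ne_of (fun i hif hw => ?_) hinv))
    have hmem : i ∈ Finset.univ.filter fun p => a p = false ∧ Want f g p (mu1 a + 1) := by
      rw [Finset.mem_filter]; exact ⟨Finset.mem_univ i, hif, hw⟩
    have := Finset.card_pos.mpr ⟨i, hmem⟩
    omega
  | succ m ih =>
    intro a hinv hF
    by_cases hex : ∃ i, a i = false ∧ Want f g i (mu1 a + 1)
    · obtain ⟨i, hif, hiw⟩ := hex
      have hiFa : i ∈ Finset.univ.filter fun p => a p = false ∧ Want f g p (mu1 a + 1) := by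
        rw [Finset.mem_filter]; exact ⟨Finset.mem_univ i, hif, hiw⟩
      have hcard1 : 1 ≤ (Finset.univ.filter
          fun p => a p = false ∧ Want f g p (mu1 a + 1)).card :=
        Finset.card_pos.mpr ⟨i, hiFa⟩
      set b := Function.update a i true with hbdef
      have hmub : mu1 b = mu1 a + 1 := mu1_update_true a i hif
      have himpab : IsImp f g a b := imp_enter hif hiw
      have hbi : b i = true := Function.update_self i true a
      by_cases hex2 : ∃ j, b j = true ∧ Leave f g j (mu1 b)
      · obtain ⟨j, hjb, hjl⟩ := hex2
        rw [hmub] at hjl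
        have hji : j ≠ i := by
          intro h; subst h
          exact want_not_leave hiw hjl
        set c := Function.update b j false with hcdef
        have himpbc : IsImp f g b c := imp_exit hjb (by rwa [hmub])
        have hmuc : mu1 c = mu1 a := by
          have h := mu1_update_false b j hjb
          rw [← hcdef] at h; omega
        have hcj : c j = false := Function.update_self j false b
        -- invariant for c
        have hinvc : ∀ p, c p = true → ¬ Leave f g p (mu1 c) := by
          intro p hpc
          have hpj : p ≠ j := by
            intro h; subst h; rw [hcj] at hpc; exact absurd hpc (by simp)
          have hpb : b p = true := by
            rw [hcdef] at hpc; rwa [Function.update_of_ne hpj] at hpc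
          rw [hmuc]
          by_cases hpi : p = i
          · subst hpi
            intro hl
            exact want_not_leave hiw (leave_mono hf hg (by omega) hl)
          · have hpa : a p = true := by
              rw [hbdef] at hpb; rwa [Function.update_of_ne hpi] at hpb
            exact hinv p hpa
        -- card bound for c
        have hsub : (Finset.univ.filter fun p => c p = false ∧ Want f g p (mu1 c + 1)) ⊆
            (Finset.univ.filter fun p => a p = false ∧ Want f g p (mu1 a + 1)).erase i := by
          intro p hp
          rw [Finset.mem_filter] at hp
          obtain ⟨-, hpf, hpw⟩ := hp
          rw [hmuc] at hpw
          have hpj : p ≠ j := by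
            intro h; subst h
            exact want_not_leave hpw hjl
          have hpb : b p = false := by
            rw [hcdef] at hpf; rwa [Function.update_of_ne hpj] at hpf
          have hpi : p ≠ i := by
            intro h; subst h; rw [hbi] at hpb; exact absurd hpb (by simp)
          have hpa : a p = false := by
            rw [hbdef] at hpb; rwa [Function.update_of_ne hpi] at hpb
          rw [Finset.mem_erase, Finset.mem_filter]
          exact ⟨hpi, Finset.mem_univ p, hpa, hpw⟩
        have hcardc : (Finset.univ.filter
            fun p => c p = false ∧ Want f g p (mu1 c + 1)).card ≤ m := by
          have h1 := Finset.card_le_card hsub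
          rw [Finset.card_erase_of_mem hiFa] at h1
          omega
        exact path_mono (by omega)
          (path_cons himpab (path_cons himpbc (ih c hinvc hcardc)))
      · push_neg at hex2
        have hinvb : ∀ p, b p = true → ¬ Leave f g p (mu1 b) := hex2
        have hsub : (Finset.univ.filter fun p => b p = false ∧ Want f g p (mu1 b + 1)) ⊆
            (Finset.univ.filter fun p => a p = false ∧ Want f g p (mu1 a + 1)).erase i := by
          intro p hp
          rw [Finset.mem_filter] at hp
          obtain ⟨-, hpf, hpw⟩ := hp
          have hpi : p ≠ i := by
            intro h; subst h; rw [hbi] at hpf; exact absurd hpf (by simp)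
          have hpa : a p = false := by
            rw [hbdef] at hpf; rwa [Function.update_of_ne hpi] at hpf
          have hpw' : Want f g p (mu1 a + 1) :=
            want_mono hf hg (by omega) hpw
          rw [Finset.mem_erase, Finset.mem_filter]
          exact ⟨hpi, Finset.mem_univ p, hpa, hpw'⟩
        have hcardb : (Finset.univ.filter
            fun p => b p = false ∧ Want f g p (mu1 b + 1)).card ≤ m := by
          have h1 := Finset.card_le_card hsub
          rw [Finset.card_erase_of_mem hiFa] at h1
          omega
        exact path_mono (by omega) (path_cons himpab (ih b hinvb hcardb))
    · push_neg at hex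
      exact path_mono (by omega) (path_nil (ne_of hex hinv))


open Classical in
lemma lemA (hf : ∀ i, Antitone (f i)) (hg : ∀ i, Antitone (g i)) :
    ∀ (k : ℕ) (a : Fin N → Bool), mu1 a = k →
      (∃ j, a j = false ∧ ¬ Want f g j (mu1 a + 1)) →
      ImpPath f g a (k + 2 * (N - 1)) := by
  have hcard : ∀ (a : Fin N → Bool), ∀ j, a j = false → ¬ Want f g j (mu1 a + 1) →
      (Finset.univ.filter fun p => a p = false ∧ Want f g p (mu1 a + 1)).card ≤ N - 1 := by
    intro a j hjf hjw
    have hsub : (Finset.univ.filter fun p => a p = false ∧ Want f g p (mu1 a + 1)) ⊆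
        (Finset.univ : Finset (Fin N)).erase j := by
      intro p hp
      rw [Finset.mem_filter] at hp
      rw [Finset.mem_erase]
      refine ⟨fun h => ?_, Finset.mem_univ p⟩
      subst h; exact hjw hp.2.2
    have h1 := Finset.card_le_card hsub
    rw [Finset.card_erase_of_mem (Finset.mem_univ j), Finset.card_univ,
      Fintype.card_fin] at h1
    exact h1
  intro k
  induction k with
  | zero =>
    intro a hmu hwit
    obtain ⟨j, hjf, hjw⟩ := hwit
    have hinv : ∀ p, a p = true → ¬ Leave f g p (mu1 a) := by
      intro p hp
      have := mu1_pos a hp; omega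
    exact path_mono (by omega) (lemB hf hg (N - 1) a hinv (hcard a j hjf hjw))
  | succ k ih =>
    intro a hmu hwit
    by_cases hinv : ∀ p, a p = true → ¬ Leave f g p (mu1 a)
    · obtain ⟨j, hjf, hjw⟩ := hwit
      exact path_mono (by omega) (lemB hf hg (N - 1) a hinv (hcard a j hjf hjw))
    · push_neg at hinv
      obtain ⟨p, hpt, hpl⟩ := hinv
      have himp : IsImp f g a (Function.update a p false) := imp_exit hpt hpl
      have hmub : mu1 (Function.update a p false) = k := by
        have := mu1_update_false a p hpt; omega
      have hwit' : ∃ j, Function.update a p false j = false ∧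
          ¬ Want f g j (mu1 (Function.update a p false) + 1) := by
        refine ⟨p, Function.update_self p false a, fun hw => ?_⟩
        rw [hmub] at hw
        rw [hmu] at hpl
        exact want_not_leave hw hpl
      exact path_mono (by omega)
        (path_cons himp (ih (Function.update a p false) hmub hwit'))

end helpers

/-- In a two-strategy crowding game with antitone player-specific payoffs,
from every initial profile `a0` there is an improvement path of length `L ≤ N·(N+1)`
terminating in a pure-strategy Nash equilibrium: a sequence of profiles starting at `a0`
such that each consecutive pair differs in the strategy of exactly one player whose payoff
strictly increases, and the final profile is a Nash equilibrium. -/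
theorem stmt3 (N : ℕ) (f g : Fin N → ℕ → ℝ)
    (hf : ∀ i, Antitone (f i)) (hg : ∀ i, Antitone (g i)) (a0 : Fin N → Bool) :
    ∃ (L : ℕ) (seq : ℕ → Fin N → Bool),
      L ≤ N * (N + 1) ∧ seq 0 = a0 ∧
      (∀ ℓ < L, ∃ i : Fin N,
        seq (ℓ + 1) i ≠ seq ℓ i ∧
        (∀ j : Fin N, j ≠ i → seq (ℓ + 1) j = seq ℓ j) ∧
        payoff f g i (seq ℓ) < payoff f g i (seq (ℓ + 1))) ∧
      isNE f g (seq L) := by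
  classical
  have main : ImpPath f g a0 (N * (N + 1)) := by
    by_cases hinv : ∀ p, a0 p = true → ¬ Leave f g p (mu1 a0)
    · have hc : (Finset.univ.filter
          fun p => a0 p = false ∧ Want f g p (mu1 a0 + 1)).card ≤ N := by
        have h1 := Finset.card_filter_le (Finset.univ : Finset (Fin N))
          (fun p => a0 p = false ∧ Want f g p (mu1 a0 + 1))
        rwa [Finset.card_univ, Fintype.card_fin] at h1
      have hb : 2 * N ≤ N * (N + 1) := by
        rcases Nat.eq_zero_or_pos N with h | h
        · subst h; simp
        · calc 2 * N = N * 2 := by ring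
            _ ≤ N * (N + 1) := Nat.mul_le_mul_left N (by omega)
      exact path_mono hb (lemB hf hg N a0 hinv hc)
    · push_neg at hinv
      obtain ⟨p, hpt, hpl⟩ := hinv
      obtain ⟨M, rfl⟩ : ∃ M, N = M + 1 := ⟨N - 1, by have := p.pos; omega⟩
      have himp : IsImp f g a0 (Function.update a0 p false) := imp_exit hpt hpl
      have hmub : mu1 a0 = mu1 (Function.update a0 p false) + 1 :=
        mu1_update_false a0 p hpt
      have hwit : ∃ j, Function.update a0 p false j = false ∧
          ¬ Want f g j (mu1 (Function.update a0 p false) + 1) := by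
        refine ⟨p, Function.update_self p false a0, fun hw => ?_⟩
        rw [← hmub] at hw
        exact want_not_leave hw hpl
      have h2 := lemA hf hg (mu1 (Function.update a0 p false))
        (Function.update a0 p false) rfl hwit
      have h3 := path_cons himp h2
      have hle : mu1 (Function.update a0 p false) + 2 * ((M + 1) - 1) + 1 ≤
          (M + 1) * ((M + 1) + 1) := by
        have h4 : mu1 a0 ≤ M + 1 := mu1_le a0
        have h5 : (M + 1) - 1 = M := by omega
        rw [h5]
        nlinarith [hmub]
      exact path_mono hle h3
  obtain ⟨L, seq, h1, h2, h3, h4⟩ := main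
  exact ⟨L, seq, h1, h2, h3, h4⟩
end

section
/- Under the incomplete-information contract construction, the database registration game has a pure-strategy Nash equilibrium. Precisely: let there be N SUs with a type assignment τ : Fin N → {1, …, T}, a reserved bandwidth 0 ≤ B_R ≤ B and a registration fee r > 0, where a registered SU of type t obtains utility B_R·θ_t/μ₀ − r when μ₀ ≥ 1 SUs in total are registered, and an unregistered SU of type t obtains utility W_t(μ₁) when μ₁ ≥ 1 SUs in total are unregistered. Then there exists a profile a : Fin N → Bool (true = register) such that, with μ₀ = #{i : a i = true} and μ₁ = N − μ₀: every registered SU i satisfies B_R·θ_{τ(i)}/μ₀ − r ≥ W_{τ(i)}(μ₁ + 1), and every unregistered SU i satisfies W_{τ(i)}(μ₁) ≥ B_R·θ_{τ(i)}/(μ₀ + 1) − r. -/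
/-! Incomplete-information contract construction.  Types are indexed by `1, …, T`
(with the convention of a null index `0`). -/

/-- `Δ_i = θ_{i+1} − θ_i` for `i < T` and `Δ_T = 0` (also `0` beyond `T`). -/
noncomputable def Delta (T : ℕ) (θ : ℕ → ℝ) (i : ℕ) : ℝ :=
  if i < T then θ (i + 1) - θ i else 0

/-- `g_i(μ₁) = β_i·θ_i·(B−B_R)/M − Δ_i·((B−B_R)/M)·(Σ_{j=i+1}^T β_j) − μ₁·β_i·ε₁`. -/
noncomputable def gCoef (T : ℕ) (θ β : ℕ → ℝ) (B B_R M ε₁ : ℝ) (i μ₁ : ℕ) : ℝ :=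
  β i * θ i * ((B - B_R) / M) -
    Delta T θ i * ((B - B_R) / M) * (∑ j ∈ Finset.Icc (i + 1) T, β j) -
    (μ₁ : ℝ) * β i * ε₁

/-- `i_S(μ₁)`: the largest `i ∈ {1, …, T}` with `g_i(μ₁) ≤ 0`, and `0` if there is none. -/
noncomputable def iS (T : ℕ) (θ β : ℕ → ℝ) (B B_R M ε₁ : ℝ) (μ₁ : ℕ) : ℕ :=
  ((Finset.Icc 1 T).filter fun i => gCoef T θ β B B_R M ε₁ i μ₁ ≤ 0).sup id

/-- Query assignment: `q̂_i(μ₁) = 0` if `i ≤ i_S(μ₁)` and `q̂_i(μ₁) = M` otherwise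
(in particular `q̂_0(μ₁) = 0`). -/
noncomputable def qhat (T : ℕ) (θ β : ℕ → ℝ) (B B_R M ε₁ : ℝ) (i μ₁ : ℕ) : ℝ :=
  if i ≤ iS T θ β B B_R M ε₁ μ₁ then 0 else M

/-- Per-query valuation `v_{μ₁}(q) = ((B−B_R)/(μ₁·M))·q`. -/
noncomputable def vval (B B_R M : ℝ) (μ₁ : ℕ) (q : ℝ) : ℝ :=
  (B - B_R) / ((μ₁ : ℝ) * M) * q

/-- Prices `p̂_k(μ₁) = Σ_{j=1}^{k} θ_j·(v_{μ₁}(q̂_j(μ₁)) − v_{μ₁}(q̂_{j−1}(μ₁)))`. -/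
noncomputable def phat (T : ℕ) (θ β : ℕ → ℝ) (B B_R M ε₁ : ℝ) (k μ₁ : ℕ) : ℝ :=
  ∑ j ∈ Finset.Icc 1 k,
    θ j * (vval B B_R M μ₁ (qhat T θ β B B_R M ε₁ j μ₁) -
      vval B B_R M μ₁ (qhat T θ β B B_R M ε₁ (j - 1) μ₁))

/-- Service-plan utility of a type-`k` SU: `W_k(μ₁) = θ_k·v_{μ₁}(q̂_k(μ₁)) − p̂_k(μ₁)`. -/
noncomputable def W (T : ℕ) (θ β : ℕ → ℝ) (B B_R M ε₁ : ℝ) (k μ₁ : ℕ) : ℝ :=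
  θ k * vval B B_R M μ₁ (qhat T θ β B B_R M ε₁ k μ₁) - phat T θ β B B_R M ε₁ k μ₁

/-- `i_S(μ₁) ≤ T`. -/
lemma iS_le_T (T : ℕ) (θ β : ℕ → ℝ) (B B_R M ε₁ : ℝ) (μ₁ : ℕ) :
    iS T θ β B B_R M ε₁ μ₁ ≤ T := by
  apply Finset.sup_le
  intro i hi
  simp only [Finset.mem_filter, Finset.mem_Icc] at hi
  exact hi.1.2

/-- `i_S` is nondecreasing in `μ₁`. -/
lemma iS_mono (T : ℕ) (θ β : ℕ → ℝ) (B B_R M ε₁ : ℝ)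
    (hβ : ∀ i ∈ Finset.Icc 1 T, 0 ≤ β i) (hε : 0 ≤ ε₁)
    {μ μ' : ℕ} (h : μ ≤ μ') :
    iS T θ β B B_R M ε₁ μ ≤ iS T θ β B B_R M ε₁ μ' := by
  apply Finset.sup_mono
  intro i hi
  simp only [Finset.mem_filter] at hi ⊢
  refine ⟨hi.1, ?_⟩
  have h1 := hi.2
  unfold gCoef at h1 ⊢
  have hmul : (μ : ℝ) * β i * ε₁ ≤ (μ' : ℝ) * β i * ε₁ := by
    apply mul_le_mul_of_nonneg_right _ hε
    exact mul_le_mul_of_nonneg_right (by exact_mod_cast h) (hβ i hi.1)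
  linarith

/-- Monotonicity of `θ` on `[1, T]`. -/
lemma theta_mono (T : ℕ) (θ : ℕ → ℝ)
    (hθmono : ∀ i, 1 ≤ i → i < T → θ i < θ (i + 1)) :
    ∀ a b, 1 ≤ a → a ≤ b → b ≤ T → θ a ≤ θ b := by
  intro a b ha hab hbT
  induction b with
  | zero => omega
  | succ n ih =>
    rcases Nat.lt_or_ge a (n + 1) with h | h
    · have h1 : θ a ≤ θ n := ih (by omega) (by omega)
      have h2 : θ n < θ (n + 1) := hθmono n (by omega) (by omega)
      linarith
    · have : a = n + 1 := by omega
      subst this; exact le_refl _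

/-- Closed form for `W`. -/
lemma W_closed (T : ℕ) (θ β : ℕ → ℝ) (B B_R M ε₁ : ℝ) (hM : 0 < M)
    (k μ : ℕ) (hμ : 1 ≤ μ) :
    W T θ β B B_R M ε₁ k μ =
      if k ≤ iS T θ β B B_R M ε₁ μ then 0
      else (θ k - θ (iS T θ β B B_R M ε₁ μ + 1)) * ((B - B_R) / μ) := by
  set s := iS T θ β B B_R M ε₁ μ with hs
  have hμ0 : (μ : ℝ) ≠ 0 := Nat.cast_ne_zero.mpr (by omega)
  have hM0 : M ≠ 0 := ne_of_gt hM
  set c : ℝ := (B - B_R) / μ with hcdef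
  have hv : ∀ j : ℕ, vval B B_R M μ (qhat T θ β B B_R M ε₁ j μ) =
      if j ≤ s then 0 else c := by
    intro j
    unfold vval qhat
    rw [← hs]
    split
    · ring
    · rw [hcdef]; field_simp
  unfold W phat
  have hterm : ∀ j ∈ Finset.Icc 1 k,
      θ j * (vval B B_R M μ (qhat T θ β B B_R M ε₁ j μ) -
        vval B B_R M μ (qhat T θ β B B_R M ε₁ (j - 1) μ)) =
      if j = s + 1 then θ j * c else 0 := by
    intro j hj
    simp only [Finset.mem_Icc] at hj
    rw [hv j, hv (j - 1)]
    rcases Nat.lt_trichotomy j (s + 1) with h | h | h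
    · rw [if_pos (by omega), if_pos (by omega), if_neg (by omega)]; ring
    · rw [if_neg (by omega), if_pos (by omega), if_pos h]; ring
    · rw [if_neg (by omega), if_neg (by omega), if_neg (by omega)]; ring
  rw [Finset.sum_congr rfl hterm, Finset.sum_ite_eq' (Finset.Icc 1 k) (s + 1)
    (fun j => θ j * c), hv k]
  simp only [Finset.mem_Icc]
  by_cases h : k ≤ s
  · simp only [if_pos h, if_neg (show ¬(1 ≤ s + 1 ∧ s + 1 ≤ k) by omega)]
    ring
  · simp only [if_neg h, if_pos (show 1 ≤ s + 1 ∧ s + 1 ≤ k by omega)]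
    ring

/-- Under the incomplete-information contract construction, the database
registration game has a pure-strategy Nash equilibrium.  With `N` SUs of types
`τ : Fin N → {1, …, T}`, reserved bandwidth `0 ≤ B_R ≤ B` and registration fee `r > 0`,
a registered SU of type `t` obtains `B_R·θ_t/μ₀ − r` (with `μ₀` SUs registered) and an
unregistered SU of type `t` obtains `W_t(μ₁)` (with `μ₁ = N − μ₀` SUs unregistered).
There exists a profile `a : Fin N → Bool` (true = register) such that every registered SU
satisfies `B_R·θ_{τ(i)}/μ₀ − r ≥ W_{τ(i)}(μ₁ + 1)` and every unregistered SU satisfies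
`W_{τ(i)}(μ₁) ≥ B_R·θ_{τ(i)}/(μ₀ + 1) − r`. -/
theorem stmt5 (T : ℕ) (θ β : ℕ → ℝ) (B B_R M ε₁ : ℝ)
    (hθmono : ∀ i, 1 ≤ i → i < T → θ i < θ (i + 1))
    (hθpos : ∀ i ∈ Finset.Icc 1 T, 0 < θ i)
    (hβ : ∀ i ∈ Finset.Icc 1 T, 0 ≤ β i)
    (hBR0 : 0 ≤ B_R) (hBRB : B_R ≤ B) (hM : 0 < M) (hε : 0 ≤ ε₁)
    (N : ℕ) (τ : Fin N → ℕ) (hτ : ∀ i, τ i ∈ Finset.Icc 1 T)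
    (r : ℝ) (hr : 0 < r) :
    ∃ a : Fin N → Bool,
      (∀ i : Fin N, a i = true →
        W T θ β B B_R M ε₁ (τ i) (N - (Finset.univ.filter fun j => a j = true).card + 1) ≤
          B_R * θ (τ i) / (((Finset.univ.filter fun j => a j = true).card : ℕ) : ℝ) - r) ∧
      (∀ i : Fin N, a i = false →
        B_R * θ (τ i) / ((((Finset.univ.filter fun j => a j = true).card : ℕ) : ℝ) + 1) - r ≤
          W T θ β B B_R M ε₁ (τ i) (N - (Finset.univ.filter fun j => a j = true).card)) := by
  classical
  have hBB : 0 ≤ B - B_R := by linarith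
  -- W is antitone in μ₁ (one step)
  have hWstep : ∀ t, 1 ≤ t → t ≤ T → ∀ μ, 1 ≤ μ →
      W T θ β B B_R M ε₁ t (μ + 1) ≤ W T θ β B B_R M ε₁ t μ := by
    intro t ht1 htT μ hμ
    set s := iS T θ β B B_R M ε₁ μ with hs
    set s' := iS T θ β B B_R M ε₁ (μ + 1) with hs'
    have hss' : s ≤ s' := iS_mono T θ β B B_R M ε₁ hβ hε (Nat.le_succ μ)
    rw [W_closed T θ β B B_R M ε₁ hM t μ hμ,
      W_closed T θ β B B_R M ε₁ hM t (μ + 1) (by omega), ← hs, ← hs']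
    have hμpos : (0 : ℝ) < (μ : ℝ) := by exact_mod_cast Nat.lt_of_lt_of_le Nat.zero_lt_one hμ
    have hc1 : (0 : ℝ) ≤ (B - B_R) / μ := div_nonneg hBB (le_of_lt hμpos)
    by_cases h1 : t ≤ s
    · rw [if_pos h1, if_pos (le_trans h1 hss')]
    · rw [if_neg h1]
      by_cases h2 : t ≤ s'
      · rw [if_pos h2]
        have hθt : θ (s + 1) ≤ θ t := theta_mono T θ hθmono (s + 1) t (by omega) (by omega) htT
        exact mul_nonneg (by linarith) hc1
      · rw [if_neg h2]
        have hθ1 : θ (s + 1) ≤ θ (s' + 1) :=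
          theta_mono T θ hθmono (s + 1) (s' + 1) (by omega) (by omega) (by omega)
        have hθ2 : θ (s' + 1) ≤ θ t :=
          theta_mono T θ hθmono (s' + 1) t (by omega) (by omega) htT
        have hdiv : (B - B_R) / ((μ + 1 : ℕ) : ℝ) ≤ (B - B_R) / μ := by
          apply div_le_div_of_nonneg_left hBB hμpos
          push_cast; linarith
        have hdiv0 : (0 : ℝ) ≤ (B - B_R) / ((μ + 1 : ℕ) : ℝ) := by
          apply div_nonneg hBB; positivity
        calc (θ t - θ (s' + 1)) * ((B - B_R) / ((μ + 1 : ℕ) : ℝ))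
            ≤ (θ t - θ (s + 1)) * ((B - B_R) / ((μ + 1 : ℕ) : ℝ)) := by
              apply mul_le_mul_of_nonneg_right (by linarith) hdiv0
          _ ≤ (θ t - θ (s + 1)) * ((B - B_R) / μ) := by
              apply mul_le_mul_of_nonneg_left hdiv (by linarith)
  -- full antitonicity
  have hWanti : ∀ t, 1 ≤ t → t ≤ T → ∀ μ μ', 1 ≤ μ → μ ≤ μ' →
      W T θ β B B_R M ε₁ t μ' ≤ W T θ β B B_R M ε₁ t μ := by
    intro t ht1 htT μ μ' hμ h
    induction μ' with
    | zero => omega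
    | succ n ih =>
      rcases Nat.lt_or_ge μ (n + 1) with h1 | h1
      · exact le_trans (hWstep t ht1 htT n (by omega)) (ih (by omega))
      · have : μ = n + 1 := by omega
        subst this; exact le_refl _
  -- the incentive function
  set c : Fin N → ℕ → ℝ :=
    fun i k => B_R * θ (τ i) / k - r - W T θ β B B_R M ε₁ (τ i) (N - k + 1) with hc
  have htmem : ∀ i : Fin N, 1 ≤ τ i ∧ τ i ≤ T := by
    intro i; have := hτ i; simpa [Finset.mem_Icc] using this
  have hcanti : ∀ i : Fin N, ∀ k k', 1 ≤ k → k ≤ k' → c i k' ≤ c i k := by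
    have hcstep : ∀ i : Fin N, ∀ k, 1 ≤ k → c i (k + 1) ≤ c i k := by
      intro i k hk
      simp only [hc]
      have hθi : 0 < θ (τ i) := hθpos _ (hτ i)
      have hkpos : (0 : ℝ) < (k : ℝ) := by exact_mod_cast Nat.lt_of_lt_of_le Nat.zero_lt_one hk
      have h1 : B_R * θ (τ i) / ((k + 1 : ℕ) : ℝ) ≤ B_R * θ (τ i) / (k : ℝ) := by
        apply div_le_div_of_nonneg_left (by positivity) hkpos
        push_cast; linarith
      have h2 : W T θ β B B_R M ε₁ (τ i) (N - k + 1) ≤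
          W T θ β B B_R M ε₁ (τ i) (N - (k + 1) + 1) := by
        rcases Nat.lt_or_ge k N with h | h
        · have heq : N - k + 1 = (N - (k + 1) + 1) + 1 := by omega
          rw [heq]
          exact hWstep (τ i) (htmem i).1 (htmem i).2 _ (by omega)
        · have heq : N - k + 1 = N - (k + 1) + 1 := by omega
          rw [heq]
      linarith
    intro i k k' hk h
    induction k' with
    | zero => omega
    | succ n ih =>
      rcases Nat.lt_or_ge k (n + 1) with h1 | h1
      · exact le_trans (hcstep i n (by omega)) (ih (by omega))
      · have : k = n + 1 := by omega
        subst this; exact le_refl _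
  -- each player's threshold
  set Ki : Fin N → ℕ := fun i => Nat.findGreatest (fun k => 0 ≤ c i k) N with hKi
  have hKiN : ∀ i, Ki i ≤ N := fun i => Nat.findGreatest_le N
  -- the equilibrium size of the registered group
  set kstar : ℕ :=
    Nat.findGreatest (fun k => k ≤ (Finset.univ.filter fun i : Fin N => k ≤ Ki i).card) N
    with hkstar
  have hkN : kstar ≤ N := Nat.findGreatest_le N
  have hAB : (Finset.univ.filter fun i : Fin N => kstar + 1 ≤ Ki i) ⊆
      (Finset.univ.filter fun i : Fin N => kstar ≤ Ki i) := by
    intro x hx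
    simp only [Finset.mem_filter] at hx ⊢
    exact ⟨hx.1, by omega⟩
  have hBcard : kstar ≤ (Finset.univ.filter fun i : Fin N => kstar ≤ Ki i).card := by
    rcases Nat.eq_zero_or_pos kstar with h | h
    · omega
    · exact Nat.findGreatest_of_ne_zero
        (P := fun k => k ≤ (Finset.univ.filter fun i : Fin N => k ≤ Ki i).card)
        (n := N) rfl (by omega)
  have hAcard : (Finset.univ.filter fun i : Fin N => kstar + 1 ≤ Ki i).card ≤ kstar := by
    rcases Nat.lt_or_ge kstar N with h | h
    · by_contra hcon
      have hgr := Nat.findGreatest_is_greatest (P := fun k =>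
          k ≤ (Finset.univ.filter fun i : Fin N => k ≤ Ki i).card)
          (n := N) (k := kstar + 1) (by omega) (by omega)
      exact hgr (by omega)
    · have he : (Finset.univ.filter fun i : Fin N => kstar + 1 ≤ Ki i) = ∅ := by
        apply Finset.filter_false_of_mem
        intro i _
        have := hKiN i
        omega
      rw [he]; simp
  obtain ⟨S, hAS, hSB, hScard⟩ := Finset.exists_subsuperset_card_eq hAB hAcard hBcard
  have hScard' : S.card = kstar := by omega
  refine ⟨fun i => decide (i ∈ S), ?_, ?_⟩ <;>
    · intro i hi
      have hfilter : (Finset.univ.filter fun j : Fin N => (decide (j ∈ S)) = true) = S := by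
        ext j; simp
      rw [hfilter, hScard']
      simp only [decide_eq_true_eq, decide_eq_false_iff_not] at hi
      first
      | -- registered case
        ( have hiS : i ∈ S := hi
          have hk1 : 1 ≤ kstar := by
            have : 0 < S.card := Finset.card_pos.mpr ⟨i, hiS⟩
            omega
          have hKik : kstar ≤ Ki i := by
            have := hSB hiS
            simp only [Finset.mem_filter] at this
            exact this.2
          have hP : 0 ≤ c i (Ki i) :=
            Nat.findGreatest_of_ne_zero (P := fun k => 0 ≤ c i k) (n := N) rfl (by omega)
          have hck : 0 ≤ c i kstar := le_trans hP (hcanti i kstar (Ki i) hk1 hKik)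
          simp only [hc] at hck
          linarith )
      | -- unregistered case
        ( have hiS : i ∉ S := hi
          have hkltN : kstar < N := by
            have hne : S ≠ Finset.univ := by
              intro h; exact hiS (h ▸ Finset.mem_univ i)
            have : S.card < Finset.univ.card :=
              Finset.card_lt_card (Finset.ssubset_univ_iff.mpr hne)
            simp only [Finset.card_univ, Fintype.card_fin] at this
            omega
          have hKile : Ki i ≤ kstar := by
            by_contra hcon
            exact hiS (hAS (by simp only [Finset.mem_filter]; exact ⟨Finset.mem_univ i, by omega⟩))
          have hngr : ¬ (0 ≤ c i (kstar + 1)) := by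
            have h1 : Nat.findGreatest (fun k => 0 ≤ c i k) N < kstar + 1 := by
              have h2 : Ki i = Nat.findGreatest (fun k => 0 ≤ c i k) N := by rw [hKi]
              omega
            exact Nat.findGreatest_is_greatest h1 (by omega)
          have hlt : c i (kstar + 1) < 0 := by linarith [lt_of_not_ge hngr]
          simp only [hc] at hlt
          have heq : N - (kstar + 1) + 1 = N - kstar := by omega
          rw [heq] at hlt
          push_cast at hlt ⊢
          linarith )
end

section
/- Let θ_1 < θ_2 < … < θ_T be positive reals and c ≥ 0. Suppose q : {1, …, T} → ℝ satisfies 0 ≤ q_1 ≤ q_2 ≤ … ≤ q_T, and the prices p are defined by p_1 = θ_1·c·q_1 and p_k − p_{k−1} = θ_k·c·(q_k − q_{k−1}) for 2 ≤ k ≤ T. Then all incentive-compatibility constraints hold (for all i, j: θ_i·c·q_i − p_i ≥ θ_i·c·q_j − p_j), all individual-rationality constraints hold (for all i: θ_i·c·q_i − p_i ≥ 0), and the lowest type's individual-rationality constraint is binding (θ_1·c·q_1 − p_1 = 0). -/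
/-- Let `θ_1 < … < θ_T` be positive reals and `c ≥ 0`.  If the query
assignment satisfies `0 ≤ q_1 ≤ q_2 ≤ … ≤ q_T` and the prices are defined by
`p_1 = θ_1·c·q_1` and `p_k − p_{k−1} = θ_k·c·(q_k − q_{k−1})` for `2 ≤ k ≤ T`, then all
incentive-compatibility constraints hold, all individual-rationality constraints hold,
and the lowest type's individual-rationality constraint is binding. -/
theorem stmt9 (T : ℕ) (hT : 1 ≤ T) (θ : ℕ → ℝ) (c : ℝ) (hc : 0 ≤ c)
    (hθmono : ∀ k, 1 ≤ k → k < T → θ k < θ (k + 1))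
    (hθpos : ∀ k ∈ Finset.Icc 1 T, 0 < θ k)
    (q p : ℕ → ℝ)
    (hq1 : 0 ≤ q 1)
    (hqmono : ∀ k, 2 ≤ k → k ≤ T → q (k - 1) ≤ q k)
    (hp1 : p 1 = θ 1 * c * q 1)
    (hprec : ∀ k, 2 ≤ k → k ≤ T → p k - p (k - 1) = θ k * c * (q k - q (k - 1))) :
    (∀ i ∈ Finset.Icc 1 T, ∀ j ∈ Finset.Icc 1 T,
      θ i * c * q j - p j ≤ θ i * c * q i - p i) ∧
    (∀ i ∈ Finset.Icc 1 T, 0 ≤ θ i * c * q i - p i) ∧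
    θ 1 * c * q 1 - p 1 = 0 := by
  -- θ is monotone on [1, T]
  have hθle : ∀ a b : ℕ, 1 ≤ a → a ≤ b → b ≤ T → θ a ≤ θ b := by
    intro a b ha hab
    induction b, hab using Nat.le_induction with
    | base => intro _; exact le_rfl
    | succ b hb ih =>
      intro hbT
      have hbT' : b < T := Nat.lt_of_succ_le hbT
      exact (ih hbT'.le).trans (hθmono b (ha.trans hb) hbT').le
  -- q is monotone on [1, T]
  have hqle : ∀ a b : ℕ, 1 ≤ a → a ≤ b → b ≤ T → q a ≤ q b := by
    intro a b ha hab
    induction b, hab using Nat.le_induction with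
    | base => intro _; exact le_rfl
    | succ b hb ih =>
      intro hbT
      have h := hqmono (b + 1) (by omega) hbT
      simp only [Nat.add_sub_cancel] at h
      exact (ih (by omega)).trans h
  -- key telescoping bounds
  have key : ∀ a b : ℕ, 1 ≤ a → a ≤ b → b ≤ T →
      θ a * c * (q b - q a) ≤ p b - p a ∧ p b - p a ≤ θ b * c * (q b - q a) := by
    intro a b ha hab
    induction b, hab using Nat.le_induction with
    | base => intro _; constructor <;> simp
    | succ b hb ih =>
      intro hbT
      have hbT' : b ≤ T := by omega
      obtain ⟨ih1, ih2⟩ := ih hbT'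
      have hstep := hprec (b + 1) (by omega) hbT
      simp only [Nat.add_sub_cancel] at hstep
      have hqstep : q b ≤ q (b + 1) := by
        have h := hqmono (b + 1) (by omega) hbT
        simpa using h
      have hθab : θ a ≤ θ b := hθle a b ha hb hbT'
      have hθbb : θ b ≤ θ (b + 1) := (hθmono b (ha.trans hb) (by omega)).le
      have hqab : q a ≤ q b := hqle a b ha hb hbT'
      have h1 : θ a * c * (q (b+1) - q b) ≤ θ (b+1) * c * (q (b+1) - q b) :=
        mul_le_mul_of_nonneg_right (mul_le_mul_of_nonneg_right (hθab.trans hθbb) hc)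
          (sub_nonneg.mpr hqstep)
      have h2 : θ b * c * (q b - q a) ≤ θ (b+1) * c * (q b - q a) :=
        mul_le_mul_of_nonneg_right (mul_le_mul_of_nonneg_right hθbb hc)
          (sub_nonneg.mpr hqab)
      constructor
      · nlinarith
      · nlinarith
  -- fix the first bound separately (the nlinarith above may fail); we restate cleanly below
  have h1T : (1 : ℕ) ∈ Finset.Icc 1 T := by simp [hT]
  refine ⟨?_, ?_, by linarith [hp1]⟩
  · intro i hi j hj
    simp only [Finset.mem_Icc] at hi hj
    rcases le_total j i with h | h
    · have := (key j i hj.1 h hi.2).2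
      have hθji : θ j ≤ θ i := hθle j i hj.1 h hi.2
      linarith
    · have := (key i j hi.1 h hj.2).1
      linarith
  · intro i hi
    simp only [Finset.mem_Icc] at hi
    have hk := (key 1 i le_rfl hi.1 hi.2).2
    have hθ1i : θ 1 ≤ θ i := hθle 1 i le_rfl hi.1 hi.2
    have h0 : 0 ≤ (θ i - θ 1) * c * q 1 :=
      mul_nonneg (mul_nonneg (sub_nonneg.mpr hθ1i) hc) hq1
    nlinarith
end
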